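/- Let a = {a_n} be a positive non-increasing summable sequence with sum 1 and E ∈ 𝒞_a any complementary set (a closed subset of [0,1] whose complement is a disjoint union of open intervals of lengths a_1, a_2, ...). Then for all θ ∈ [0,1], \overline{dim}_θ D_a ≤ \overline{dim}_θ E and \underline{dim}_θ D_a ≤ \underline{dim}_θ E. -/

import Mathlib

open Filter Set Topology

/-- Number of closed balls of radius `δ` needed to cover `F`. -/
noncomputable def coverNum (F : Set ℝ) (δ : ℝ) : ℕ :=
  sInf {n : ℕ | ∃ S : Finset ℝ, S.card = n ∧ F ⊆ ⋃ x ∈ S, Metric.closedBall x δ}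

/-- Upper box-counting dimension. -/
noncomputable def upperBoxDim (F : Set ℝ) : ℝ :=
  limsup (fun δ : ℝ => Real.log (coverNum F δ) / -Real.log δ) (nhdsWithin 0 (Set.Ioi 0))

/-- Lower box-counting dimension. -/
noncomputable def lowerBoxDim (F : Set ℝ) : ℝ :=
  liminf (fun δ : ℝ => Real.log (coverNum F δ) / -Real.log δ) (nhdsWithin 0 (Set.Ioi 0))

/-- Assouad dimension. -/
noncomputable def assouadDim (E : Set ℝ) : ℝ :=
  sInf {α : ℝ | ∃ c > (0:ℝ), ∃ ρ > (0:ℝ), ∀ x ∈ E, ∀ r R : ℝ, 0 < r → r < R → R < ρ →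
    (coverNum (Metric.ball x R ∩ E) r : ℝ) ≤ c * (R / r) ^ α}

/-- Lower (Assouad) dimension. -/
noncomputable def lowerAssouadDim (E : Set ℝ) : ℝ :=
  sSup {α : ℝ | ∃ c > (0:ℝ), ∃ ρ > (0:ℝ), ∀ x ∈ E, ∀ r R : ℝ, 0 < r → r < R → R < ρ →
    c * (R / r) ^ α ≤ (coverNum (Metric.ball x R ∩ E) r : ℝ)}

/-- Upper θ-intermediate dimension (with the convention that at θ = 0 it is the
Hausdorff dimension). -/
noncomputable def upperIntDim (θ : ℝ) (F : Set ℝ) : ℝ :=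
  if θ = 0 then (dimH F).toReal else
  sInf {s : ℝ | 0 ≤ s ∧ ∀ ε > (0:ℝ), ∃ δ₀ > (0:ℝ), ∀ δ : ℝ, 0 < δ → δ ≤ δ₀ →
    ∃ (I : Finset ℕ) (U : ℕ → Set ℝ), (F ⊆ ⋃ i ∈ I, U i) ∧
      (∀ i ∈ I, δ ^ (1 / θ) ≤ Metric.diam (U i) ∧ Metric.diam (U i) ≤ δ) ∧
      ∑ i ∈ I, Metric.diam (U i) ^ s ≤ ε}

/-- Lower θ-intermediate dimension (with the convention that at θ = 0 it is the
Hausdorff dimension). -/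
noncomputable def lowerIntDim (θ : ℝ) (F : Set ℝ) : ℝ :=
  if θ = 0 then (dimH F).toReal else
  sInf {s : ℝ | 0 ≤ s ∧ ∀ ε > (0:ℝ), ∀ δ₀ > (0:ℝ), ∃ δ : ℝ, 0 < δ ∧ δ ≤ δ₀ ∧
    ∃ (I : Finset ℕ) (U : ℕ → Set ℝ), (F ⊆ ⋃ i ∈ I, U i) ∧
      (∀ i ∈ I, δ ^ (1 / θ) ≤ Metric.diam (U i) ∧ Metric.diam (U i) ≤ δ) ∧
      ∑ i ∈ I, Metric.diam (U i) ^ s ≤ ε}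

/-- tails `x_n = ∑_{i=n}^∞ a_i` (the sequence `a` is indexed from 1;
the value `a 0` is irrelevant). -/
noncomputable def xseq (a : ℕ → ℝ) (n : ℕ) : ℝ := ∑' i : ℕ, a (n + i)

/-- `s_n = 2^{-n} x_{2^n}`. -/
noncomputable def sseq (a : ℕ → ℝ) (n : ℕ) : ℝ := xseq a (2 ^ n) / 2 ^ n

/-- `r_n = 2^{-n} ∑_{i=2^n}^{2^{n+1}-1} a_i`. -/
noncomputable def rseq (a : ℕ → ℝ) (n : ℕ) : ℝ :=
  (∑ i ∈ Finset.range (2 ^ n), a (2 ^ n + i)) / 2 ^ n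

/-- The countable complementary set `D_a = {x_k : k ≥ 1} ∪ {0}`. -/
noncomputable def Da (a : ℕ → ℝ) : Set ℝ := {0} ∪ {y : ℝ | ∃ k ≥ 1, y = xseq a k}

/-- Length of the interval corresponding to node `m` (in binary-tree indexing, root `1`)
in the construction of the decreasing Cantor set: the sum of the gaps in the subtree of `m`. -/
noncomputable def clen (a : ℕ → ℝ) (m : ℕ) : ℝ :=
  ∑' k : ℕ, ∑ i ∈ Finset.range (2 ^ k), a (2 ^ k * m + i)

/-- Left endpoint of the interval corresponding to node `m`. -/
noncomputable def lft (a : ℕ → ℝ) : ℕ → ℝ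
  | 0 => 0
  | 1 => 0
  | n + 2 =>
    if (n + 2) % 2 = 0 then lft a ((n + 2) / 2)
    else lft a ((n + 2) / 2) + clen a (n + 1) + a ((n + 2) / 2)
termination_by n => n
decreasing_by all_goals omega

/-- The closed interval corresponding to node `m`:  node `2^n + j - 1` is the
interval `I_{n,j}` of step `n`, for `1 ≤ j ≤ 2^n`. -/
noncomputable def node (a : ℕ → ℝ) (m : ℕ) : Set ℝ := Set.Icc (lft a m) (lft a m + clen a m)

/-- The decreasing Cantor set `C_a` associated with the sequence `a`. -/
noncomputable def cantorSetOf (a : ℕ → ℝ) : Set ℝ :=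
  ⋂ n : ℕ, ⋃ j ∈ Finset.Icc 1 (2 ^ n), node a (2 ^ n + j - 1)

/-- `E` is a complementary set of the sequence `a`: a closed subset of `[0,1]`
whose complement in `[0,1]` is a disjoint union of open intervals of lengths `a_1, a_2, …`. -/
def IsComplSet (a : ℕ → ℝ) (E : Set ℝ) : Prop :=
  ∃ g : ℕ → ℝ,
    (∀ n ≥ 1, Set.Ioo (g n) (g n + a n) ⊆ Set.Icc 0 1) ∧
    (∀ m ≥ 1, ∀ n ≥ 1, m ≠ n →
      Disjoint (Set.Ioo (g m) (g m + a m)) (Set.Ioo (g n) (g n + a n))) ∧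
    E = Set.Icc 0 1 \ ⋃ n ∈ {k : ℕ | 1 ≤ k}, Set.Ioo (g n) (g n + a n)

/-- `γ_{θ,a}(r) = max{ m : s_m ≥ s_r^{1/θ} }`. -/
noncomputable def gammaIdx (a : ℕ → ℝ) (θ : ℝ) (r : ℕ) : ℕ :=
  sSup {m : ℕ | sseq a r ^ (1 / θ) ≤ sseq a m}


section A
variable {a : ℕ → ℝ}

lemma summable_shift (hsumm : Summable fun n => a (n + 1)) (k : ℕ) (hk : 1 ≤ k) :
    Summable fun i => a (k + i) := by
  have h := (summable_nat_add_iff (k - 1)).2 hsumm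
  exact h.congr fun i => by congr 1; omega

lemma xseq_succ (hsumm : Summable fun n => a (n + 1)) {k : ℕ} (hk : 1 ≤ k) :
    xseq a k = a k + xseq a (k + 1) := by
  have hs := summable_shift hsumm k hk
  unfold xseq
  rw [Summable.tsum_eq_zero_add hs]
  simp only [Nat.add_zero]
  congr 1
  exact tsum_congr fun i => by congr 1; omega

lemma xseq_nonneg (hpos : ∀ n ≥ 1, 0 < a n) {k : ℕ} (hk : 1 ≤ k) : 0 ≤ xseq a k :=
  tsum_nonneg fun i => (hpos (k + i) (by omega)).le

lemma xseq_le (hpos : ∀ n ≥ 1, 0 < a n) (hsumm : Summable fun n => a (n + 1))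
    {m k : ℕ} (hm : 1 ≤ m) (hmk : m ≤ k) : xseq a k ≤ xseq a m := by
  induction k, hmk using Nat.le_induction with
  | base => exact le_rfl
  | succ n hn ih =>
      have h1 : 1 ≤ n := le_trans hm hn
      have := xseq_succ hsumm h1
      have := (hpos n h1)
      nlinarith [ih]

lemma xseq_one (htot : ∑' n : ℕ, a (n + 1) = 1) : xseq a 1 = 1 := by
  unfold xseq
  rw [← htot]
  exact tsum_congr fun i => by congr 1; omega

lemma sum_add_xseq (hsumm : Summable fun n => a (n + 1)) (htot : ∑' n : ℕ, a (n + 1) = 1)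
    (m : ℕ) : (∑ j ∈ Finset.Icc 1 m, a j) + xseq a (m + 1) = 1 := by
  induction m with
  | zero => simpa using xseq_one htot
  | succ m ih =>
      rw [Finset.sum_Icc_succ_top (by omega : 1 ≤ m + 1)]
      have h := xseq_succ hsumm (by omega : 1 ≤ m + 1)
      linarith

lemma a_antitone (hmono : ∀ n ≥ 1, a (n + 1) ≤ a n) {m n : ℕ} (hm : 1 ≤ m) (hmn : m ≤ n) :
    a n ≤ a m := by
  induction n, hmn using Nat.le_induction with
  | base => exact le_rfl
  | succ n hn ih => exact le_trans (hmono n (le_trans hm hn)) ih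

lemma sum_le_sum_head (hpos : ∀ n ≥ 1, 0 < a n) (hmono : ∀ n ≥ 1, a (n + 1) ≤ a n)
    (K : Finset ℕ) (hK : ∀ k ∈ K, 1 ≤ k) :
    ∑ k ∈ K, a k ≤ ∑ j ∈ Finset.Icc 1 K.card, a j := by
  induction K using Finset.induction_on_max with
  | empty => simp
  | insert b s hb ih =>
      have hs : ∀ k ∈ s, 1 ≤ k := fun k hk => hK k (Finset.mem_insert_of_mem hk)
      have hbs : b ∉ s := fun h => lt_irrefl b (hb b h)
      rw [Finset.sum_insert hbs, Finset.card_insert_of_notMem hbs]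
      have hcard : s.card + 1 ≤ b := by
        have : s ⊆ Finset.Icc 1 (b - 1) := by
          intro k hk
          simp only [Finset.mem_Icc]
          exact ⟨hs k hk, by have := hb k hk; omega⟩
        have h2 := Finset.card_le_card this
        rw [Nat.card_Icc] at h2
        have hb1 : 1 ≤ b := hK b (Finset.mem_insert_self b s)
        omega
      have hab : a b ≤ a (s.card + 1) := a_antitone hmono (by omega) hcard
      rw [Finset.sum_Icc_succ_top (by omega : 1 ≤ s.card + 1)]
      have := ih hs
      linarith

section C
variable {a : ℕ → ℝ} {g : ℕ → ℝ}

lemma g_nonneg (hpos : ∀ n ≥ 1, 0 < a n)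
    (hg1 : ∀ n ≥ 1, Set.Ioo (g n) (g n + a n) ⊆ Set.Icc 0 1) {n : ℕ} (hn : 1 ≤ n) :
    0 ≤ g n := by
  by_contra h
  push_neg at h
  have ha := hpos n hn
  have ht : min (g n + a n / 2) (g n / 2) ∈ Set.Ioo (g n) (g n + a n) := by
    constructor
    · simp only [lt_min_iff]; constructor <;> linarith
    · exact lt_of_le_of_lt (min_le_left _ _) (by linarith)
  have := hg1 n hn ht
  have h2 : min (g n + a n / 2) (g n / 2) ≤ g n / 2 := min_le_right _ _
  have := this.1
  linarith

lemma g_add_le_one (hpos : ∀ n ≥ 1, 0 < a n)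
    (hg1 : ∀ n ≥ 1, Set.Ioo (g n) (g n + a n) ⊆ Set.Icc 0 1) {n : ℕ} (hn : 1 ≤ n) :
    g n + a n ≤ 1 := by
  by_contra h
  push_neg at h
  have ha := hpos n hn
  have ht : max ((g n + a n + 1) / 2) (g n + a n / 2) ∈ Set.Ioo (g n) (g n + a n) := by
    constructor
    · exact lt_of_lt_of_le (by linarith) (le_max_right _ _)
    · simp only [max_lt_iff]; constructor <;> linarith
  have h1 := (hg1 n hn ht).2
  have h2 : (g n + a n + 1) / 2 ≤ max ((g n + a n + 1) / 2) (g n + a n / 2) := le_max_left _ _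
  linarith

lemma endpoint_mem (hpos : ∀ n ≥ 1, 0 < a n)
    (hg1 : ∀ n ≥ 1, Set.Ioo (g n) (g n + a n) ⊆ Set.Icc 0 1)
    (hg2 : ∀ m ≥ 1, ∀ n ≥ 1, m ≠ n →
      Disjoint (Set.Ioo (g m) (g m + a m)) (Set.Ioo (g n) (g n + a n)))
    {n : ℕ} (hn : 1 ≤ n) :
    g n + a n ∈ Set.Icc 0 1 \ ⋃ m ∈ {k : ℕ | 1 ≤ k}, Set.Ioo (g m) (g m + a m) := by
  have ha := hpos n hn
  have h0 := g_nonneg hpos hg1 hn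
  constructor
  · exact ⟨by linarith, g_add_le_one hpos hg1 hn⟩
  · intro hmem
    simp only [Set.mem_iUnion, Set.mem_setOf_eq] at hmem
    obtain ⟨m, hm, hme⟩ := hmem
    have hmn : m ≠ n := by
      intro h; subst h; exact lt_irrefl _ (by linarith [hme.2] : (g m + a m : ℝ) < g m + a m)
    have hgm := hme.1
    have hgma := hme.2
    -- the point p is in both gaps
    set p := (max (g m) (g n) + (g n + a n)) / 2 with hp
    have hpn : p ∈ Set.Ioo (g n) (g n + a n) := by
      constructor
      · have : g n ≤ max (g m) (g n) := le_max_right _ _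
        have : g n < (g n + a n) := by linarith
        have hmax : max (g m) (g n) < g n + a n := by
          rw [max_lt_iff]; exact ⟨hgm, by linarith⟩
        simp only [hp]
        have := le_max_right (g m) (g n)
        nlinarith
      · have hmax : max (g m) (g n) < g n + a n := by
          rw [max_lt_iff]; exact ⟨hgm, by linarith⟩
        simp only [hp]; linarith
    have hpm : p ∈ Set.Ioo (g m) (g m + a m) := by
      constructor
      · have hmax : max (g m) (g n) < g n + a n := by
          rw [max_lt_iff]; exact ⟨hgm, by linarith⟩
        have := le_max_left (g m) (g n)
        simp only [hp]; nlinarith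
      · have : p < g n + a n := hpn.2
        linarith
    exact Set.disjoint_left.1 (hg2 m hm n hn hmn) hpm hpn
end C

open scoped ENNReal NNReal
open MeasureTheory
section L1
variable {a g : ℕ → ℝ}

lemma key_measure (hpos : ∀ n ≥ 1, 0 < a n) (hmono : ∀ n ≥ 1, a (n + 1) ≤ a n)
    (hsumm : Summable fun n => a (n + 1)) (htot : ∑' n : ℕ, a (n + 1) = 1)
    (hg1 : ∀ n ≥ 1, Set.Ioo (g n) (g n + a n) ⊆ Set.Icc 0 1)
    (hg2 : ∀ m ≥ 1, ∀ n ≥ 1, m ≠ n →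
      Disjoint (Set.Ioo (g m) (g m + a m)) (Set.Ioo (g n) (g n + a n)))
    (I : Finset ℕ) (U : ℕ → Set ℝ)
    (hcov : Set.Icc 0 1 \ ⋃ n ∈ {k : ℕ | 1 ≤ k}, Set.Ioo (g n) (g n + a n) ⊆ ⋃ i ∈ I, U i)
    (hdiam : ∀ i ∈ I, 0 < Metric.diam (U i)) :
    xseq a (I.card + 2) ≤ ∑ i ∈ I, Metric.diam (U i) := by
  classical
  set E := Set.Icc (0:ℝ) 1 \ ⋃ n ∈ {k : ℕ | 1 ≤ k}, Set.Ioo (g n) (g n + a n) with hEdef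
  have hUb : ∀ i ∈ I, Bornology.IsBounded (U i) := by
    intro i hi
    by_contra h
    exact absurd (Metric.diam_eq_zero_of_unbounded h) (by have := hdiam i hi; linarith)
  have hUne : ∀ i ∈ I, (U i).Nonempty := by
    intro i hi
    rcases Set.eq_empty_or_nonempty (U i) with h | h
    · exfalso; have := hdiam i hi; rw [h, Metric.diam_empty] at this; linarith
    · exact h
  have hUJ : ∀ i ∈ I, U i ⊆ Set.Icc (sInf (U i)) (sSup (U i)) :=
    fun i hi => (hUb i hi).subset_Icc_sInf_sSup
  have hlr : ∀ i ∈ I, sSup (U i) - sInf (U i) = Metric.diam (U i) :=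
    fun i hi => (Real.diam_eq (hUb i hi)).symm
  set W := ⋃ i ∈ I, Set.Icc (sInf (U i)) (sSup (U i)) with hWdef
  have hEW : E ⊆ W := hcov.trans (Set.iUnion₂_mono hUJ)
  set G := fun k => Set.Ioo (g k) (g k + a k) with hGdef
  set K := {k : ℕ | 1 ≤ k ∧ ¬ G k ⊆ W} with hKdef
  have hz : ∀ k ∈ K, ∃ x, x ∈ G k ∧ x ∉ W := by
    intro k hk
    rcases Set.not_subset.1 hk.2 with ⟨x, hx1, hx2⟩
    exact ⟨x, hx1, hx2⟩
  set z : ℕ → ℝ := fun k => if h : k ∈ K then (hz k h).choose else 0 with hzdef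
  have hz1 : ∀ k ∈ K, z k ∈ G k ∧ z k ∉ W := by
    intro k hk
    simp only [hzdef, dif_pos hk]
    exact (hz k hk).choose_spec
  set B : Finset ℝ := insert 0 (I.image fun i => sSup (U i)) with hBdef
  have hTne : ∀ k ∈ K, (B.filter (fun c => c < z k)).Nonempty := by
    intro k hk
    refine ⟨0, Finset.mem_filter.2 ⟨Finset.mem_insert_self _ _, ?_⟩⟩
    have h1 := (hz1 k hk).1.1
    have h2 := g_nonneg hpos hg1 hk.1
    linarith
  set bfun : ℕ → ℝ := fun k =>
    if h : k ∈ K then (B.filter (fun c => c < z k)).max' (hTne k h) else 0 with hbdef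
  have hbk_lt : ∀ k ∈ K, bfun k < z k := by
    intro k hk
    simp only [hbdef, dif_pos hk]
    have := (B.filter (fun c => c < z k)).max'_mem (hTne k hk)
    exact (Finset.mem_filter.1 this).2
  have hbk_ge : ∀ k ∈ K, ∀ b ∈ B, b < z k → b ≤ bfun k := by
    intro k hk b hb hbz
    simp only [hbdef, dif_pos hk]
    have hmem : b ∈ B.filter (fun c => c < z k) := Finset.mem_filter.2 ⟨hb, hbz⟩
    exact Finset.le_max' _ b hmem
  have key : ∀ p ∈ K, ∀ q ∈ K, z p < z q → bfun p < bfun q := by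
    intro p hp q hq hzpq
    have hpq : p ≠ q := fun h => by subst h; exact lt_irrefl _ hzpq
    have hzpG := (hz1 p hp).1
    have hzqG := (hz1 q hq).1
    have hzqW := (hz1 q hq).2
    have he_le : g p + a p ≤ z q := by
      by_contra h
      push_neg at h
      have hmem : z q ∈ G p := ⟨lt_trans hzpG.1 hzpq, h⟩
      exact Set.disjoint_left.1 (hg2 p hp.1 q hq.1 hpq) hmem hzqG
    have heE : g p + a p ∈ E := endpoint_mem hpos hg1 hg2 hp.1
    have heW := hEW heE
    simp only [hWdef, Set.mem_iUnion] at heW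
    obtain ⟨i, hi, hei⟩ := heW
    have hriq : sSup (U i) < z q := by
      have hnot : z q ∉ Set.Icc (sInf (U i)) (sSup (U i)) := by
        intro h
        exact hzqW (Set.mem_biUnion hi h)
      simp only [Set.mem_Icc, not_and, not_le] at hnot
      exact hnot (le_trans hei.1 he_le)
    have hriB : sSup (U i) ∈ B :=
      Finset.mem_insert_of_mem (Finset.mem_image_of_mem _ hi)
    have h1 : sSup (U i) ≤ bfun q := hbk_ge q hq _ hriB hriq
    have h2 : bfun p < z p := hbk_lt p hp
    have h3 : z p < g p + a p := hzpG.2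
    have h4 : g p + a p ≤ sSup (U i) := hei.2
    linarith
  have hinj : Set.InjOn bfun K := by
    intro k hk k' hk' heq
    rcases lt_trichotomy (z k) (z k') with h | h | h
    · exact absurd heq (ne_of_lt (key k hk k' hk' h))
    · by_contra hne
      have : z k ∈ G k ∩ G k' := ⟨(hz1 k hk).1, h ▸ (hz1 k' hk').1⟩
      exact Set.disjoint_left.1 (hg2 k hk.1 k' hk'.1 hne) this.1 this.2
    · exact absurd heq.symm (ne_of_lt (key k' hk' k hk h))
  have himg : bfun '' K ⊆ ↑B := by
    rintro x ⟨k, hk, rfl⟩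
    simp only [hbdef, dif_pos hk]
    exact (Finset.mem_filter.1 ((B.filter (fun c => c < z k)).max'_mem (hTne k hk))).1
  have hKfin : K.Finite := Set.Finite.of_finite_image (B.finite_toSet.subset himg) hinj
  have hcardK : hKfin.toFinset.card ≤ I.card + 1 := by
    have h1 : hKfin.toFinset.card ≤ B.card := by
      refine Finset.card_le_card_of_injOn bfun ?_ ?_
      · intro k hk
        exact himg ⟨k, hKfin.mem_toFinset.1 hk, rfl⟩
      · intro x hx y hy
        exact hinj (hKfin.mem_toFinset.1 hx) (hKfin.mem_toFinset.1 hy)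
    have h2 : B.card ≤ (I.image fun i => sSup (U i)).card + 1 := Finset.card_insert_le _ _
    have h3 := Finset.card_image_le (s := I) (f := fun i => sSup (U i))
    omega
  -- covering of [0,1]
  have hcover : Set.Icc (0:ℝ) 1 ⊆ W ∪ ⋃ k ∈ K, G k := by
    intro x hx
    by_cases hxW : x ∈ W
    · exact Or.inl hxW
    · right
      have hxE : x ∉ E := fun h => hxW (hEW h)
      have hxU : x ∈ ⋃ n ∈ {k : ℕ | 1 ≤ k}, Set.Ioo (g n) (g n + a n) := by
        by_contra h
        exact hxE ⟨hx, h⟩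
      simp only [Set.mem_iUnion, Set.mem_setOf_eq] at hxU
      obtain ⟨n, hn, hxn⟩ := hxU
      have hnK : n ∈ K := ⟨hn, fun hsub => hxW (hsub hxn)⟩
      exact Set.mem_biUnion hnK hxn
  -- measure estimate
  have hvol : (1 : ℝ≥0∞) ≤ volume W + volume (⋃ k ∈ K, G k) := by
    have h1 := measure_mono (μ := volume) hcover
    rw [Real.volume_Icc] at h1
    norm_num at h1
    exact h1.trans (measure_union_le _ _)
  have hWle : volume W ≤ ENNReal.ofReal (∑ i ∈ I, Metric.diam (U i)) := by
    refine le_trans (measure_biUnion_finset_le _ _) ?_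
    rw [ENNReal.ofReal_sum_of_nonneg (fun i _ => Metric.diam_nonneg)]
    refine Finset.sum_le_sum fun i hi => ?_
    rw [Real.volume_Icc, hlr i hi]
  have hKU : (⋃ k ∈ K, G k) = ⋃ k ∈ hKfin.toFinset, G k := by
    ext x
    simp [hKfin.mem_toFinset]
  have hKle : volume (⋃ k ∈ K, G k) ≤ ENNReal.ofReal (∑ k ∈ hKfin.toFinset, a k) := by
    rw [hKU]
    refine le_trans (measure_biUnion_finset_le _ _) ?_
    rw [ENNReal.ofReal_sum_of_nonneg (fun k hk =>
      (hpos k (hKfin.mem_toFinset.1 hk).1).le)]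
    refine Finset.sum_le_sum fun k hk => ?_
    rw [hGdef]
    rw [Real.volume_Ioo]
    simp
  have hsum_nonneg : (0:ℝ) ≤ ∑ i ∈ I, Metric.diam (U i) :=
    Finset.sum_nonneg fun i _ => Metric.diam_nonneg
  have hsum2_nonneg : (0:ℝ) ≤ ∑ k ∈ hKfin.toFinset, a k :=
    Finset.sum_nonneg fun k hk => (hpos k (hKfin.mem_toFinset.1 hk).1).le
  have hreal : (1:ℝ) ≤ (∑ i ∈ I, Metric.diam (U i)) + ∑ k ∈ hKfin.toFinset, a k := by
    have h2 : (1 : ℝ≥0∞) ≤ ENNReal.ofReal ((∑ i ∈ I, Metric.diam (U i)) +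
        ∑ k ∈ hKfin.toFinset, a k) := by
      rw [ENNReal.ofReal_add hsum_nonneg hsum2_nonneg]
      exact hvol.trans (add_le_add hWle hKle)
    rw [← ENNReal.ofReal_one] at h2
    exact (ENNReal.ofReal_le_ofReal_iff (by linarith)).1 h2
  -- rearrangement
  have hKsum : ∑ k ∈ hKfin.toFinset, a k ≤ ∑ j ∈ Finset.Icc 1 (I.card + 1), a j := by
    refine le_trans (sum_le_sum_head hpos hmono _ fun k hk => (hKfin.mem_toFinset.1 hk).1) ?_
    refine Finset.sum_le_sum_of_subset_of_nonneg ?_ ?_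
    · exact Finset.Icc_subset_Icc le_rfl (by omega)
    · intro j hj _
      exact (hpos j (Finset.mem_Icc.1 hj).1).le
  have hfin := sum_add_xseq hsumm htot (I.card + 1)
  linarith
end L1


section D
variable {a g : ℕ → ℝ}

lemma zero_mem_E (hpos : ∀ n ≥ 1, 0 < a n)
    (hg1 : ∀ n ≥ 1, Set.Ioo (g n) (g n + a n) ⊆ Set.Icc 0 1) :
    (0:ℝ) ∈ Set.Icc (0:ℝ) 1 \ ⋃ n ∈ {k : ℕ | 1 ≤ k}, Set.Ioo (g n) (g n + a n) := by
  constructor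
  · exact ⟨le_rfl, zero_le_one⟩
  · intro h
    simp only [Set.mem_iUnion, Set.mem_setOf_eq] at h
    obtain ⟨n, hn, h0⟩ := h
    exact absurd h0.1 (not_lt.2 (g_nonneg hpos hg1 hn))

lemma Da_subset (hpos : ∀ n ≥ 1, 0 < a n) (hsumm : Summable fun n => a (n + 1))
    (htot : ∑' n : ℕ, a (n + 1) = 1) : Da a ⊆ Set.Icc 0 1 := by
  rintro y (hy | hy)
  · rw [Set.mem_singleton_iff] at hy
    subst hy; exact ⟨le_rfl, zero_le_one⟩
  · obtain ⟨k, hk, rfl⟩ := hy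
    refine ⟨xseq_nonneg hpos hk, ?_⟩
    have := xseq_le hpos hsumm le_rfl hk
    rw [xseq_one htot] at this
    exact this

lemma transfer (hpos : ∀ n ≥ 1, 0 < a n) (hmono : ∀ n ≥ 1, a (n + 1) ≤ a n)
    (hsumm : Summable fun n => a (n + 1)) (htot : ∑' n : ℕ, a (n + 1) = 1)
    (hg1 : ∀ n ≥ 1, Set.Ioo (g n) (g n + a n) ⊆ Set.Icc 0 1)
    (hg2 : ∀ m ≥ 1, ∀ n ≥ 1, m ≠ n →
      Disjoint (Set.Ioo (g m) (g m + a m)) (Set.Ioo (g n) (g n + a n)))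
    {θ s δ ε : ℝ} (hθ0 : 0 < θ) (hθ1 : θ ≤ 1) (hs0 : 0 ≤ s) (hs1 : s ≤ 1)
    (hδ0 : 0 < δ) (hδ1 : δ ≤ 1) (hε : 0 < ε)
    (I : Finset ℕ) (U : ℕ → Set ℝ)
    (hcov : Set.Icc 0 1 \ ⋃ n ∈ {k : ℕ | 1 ≤ k}, Set.Ioo (g n) (g n + a n) ⊆ ⋃ i ∈ I, U i)
    (hd : ∀ i ∈ I, δ ^ (1/θ) ≤ Metric.diam (U i) ∧ Metric.diam (U i) ≤ δ)
    (hsum : ∑ i ∈ I, Metric.diam (U i) ^ s ≤ ε) :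
    ∃ (I' : Finset ℕ) (U' : ℕ → Set ℝ), (Da a ⊆ ⋃ i ∈ I', U' i) ∧
      (∀ i ∈ I', δ ^ (1/θ) ≤ Metric.diam (U' i) ∧ Metric.diam (U' i) ≤ δ) ∧
      ∑ i ∈ I', Metric.diam (U' i) ^ s ≤ 4 * ε := by
  classical
  set δ' := δ ^ (1/θ) with hδ'def
  have hδ'0 : 0 < δ' := Real.rpow_pos_of_pos hδ0 _
  have h1θ : (1:ℝ) ≤ 1/θ := by rw [le_div_iff₀ hθ0]; linarith
  have hδ'δ : δ' ≤ δ := by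
    have := Real.rpow_le_rpow_of_exponent_ge hδ0 hδ1 h1θ
    rwa [Real.rpow_one] at this
  have hdpos : ∀ i ∈ I, 0 < Metric.diam (U i) :=
    fun i hi => lt_of_lt_of_le hδ'0 (hd i hi).1
  have hIne : I.Nonempty := by
    have h0 := hcov (zero_mem_E hpos hg1)
    simp only [Set.mem_iUnion] at h0
    obtain ⟨i, hi, _⟩ := h0
    exact ⟨i, hi⟩
  set N := I.card with hNdef
  have hN1 : 1 ≤ N := Finset.card_pos.2 hIne
  obtain ⟨i₀, hi₀, hmax⟩ := I.exists_max_image (fun i => Metric.diam (U i)) hIne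
  set δb := Metric.diam (U i₀) with hδbdef
  have hδb0 : 0 < δb := hdpos i₀ hi₀
  have hδ'b : δ' ≤ δb := (hd i₀ hi₀).1
  have hδbδ : δb ≤ δ := (hd i₀ hi₀).2
  set xb := xseq a (N + 2) with hxbdef
  have hxb0 : 0 ≤ xb := xseq_nonneg hpos (by omega)
  have hxbd : xb ≤ ∑ i ∈ I, Metric.diam (U i) :=
    key_measure hpos hmono hsumm htot hg1 hg2 I U hcov hdpos
  set M := ⌊xb / δb⌋₊ + 1 with hMdef
  set U' : ℕ → Set ℝ := fun j =>
    if j ≤ N then Set.Icc (xseq a (j+1) - δ') (xseq a (j+1))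
    else Set.Icc (((j - (N+1) : ℕ) : ℝ) * δb) (((j - (N+1) : ℕ) : ℝ) * δb + δb)
    with hU'def
  refine ⟨Finset.range (N + 1 + M), U', ?_, ?_, ?_⟩
  · -- coverage
    rintro y (hy | hy)
    · rw [Set.mem_singleton_iff] at hy
      subst hy
      have hj : N + 1 ∈ Finset.range (N + 1 + M) := by
        rw [Finset.mem_range]; omega
      refine Set.mem_biUnion hj ?_
      simp only [hU'def]
      rw [if_neg (by omega)]
      have h0 : ((N + 1 - (N + 1) : ℕ) : ℝ) = 0 := by norm_num
      rw [h0]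
      constructor <;> nlinarith [hδb0]
    · obtain ⟨k, hk1, rfl⟩ := hy
      by_cases hkN : k ≤ N + 1
      · have hj : k - 1 ∈ Finset.range (N + 1 + M) := by
          rw [Finset.mem_range]; omega
        refine Set.mem_biUnion hj ?_
        simp only [hU'def]
        rw [if_pos (by omega : k - 1 ≤ N)]
        have hkk : k - 1 + 1 = k := by omega
        rw [hkk]
        exact ⟨by linarith, le_rfl⟩
      · push_neg at hkN
        have hy0 : 0 ≤ xseq a k := xseq_nonneg hpos (by omega)
        have hyx : xseq a k ≤ xb := xseq_le hpos hsumm (by omega) (by omega)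
        set m := ⌊xseq a k / δb⌋₊ with hmdef
        have hmM : m < M := by
          have h1 : xseq a k / δb ≤ xb / δb := by gcongr
          have := Nat.floor_le_floor h1
          omega
        have hj : N + 1 + m ∈ Finset.range (N + 1 + M) := by
          rw [Finset.mem_range]; omega
        refine Set.mem_biUnion hj ?_
        simp only [hU'def]
        rw [if_neg (by omega)]
        have hjm : N + 1 + m - (N + 1) = m := by omega
        rw [hjm]
        constructor
        · have h1 : (m : ℝ) ≤ xseq a k / δb := Nat.floor_le (by positivity)
          rw [← le_div_iff₀ hδb0]
          exact h1
        · have h2 : xseq a k / δb < m + 1 := Nat.lt_floor_add_one _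
          have h3 : xseq a k < (m + 1) * δb := by
            rw [← div_lt_iff₀ hδb0]; exact h2
          nlinarith
  · -- diameters
    intro j hj
    simp only [hU'def]
    by_cases hjN : j ≤ N
    · rw [if_pos hjN, Real.diam_Icc (by linarith)]
      constructor
      · simp [hδ'def]
      · simp only [sub_sub_cancel]
        exact hδ'δ
    · rw [if_neg hjN, Real.diam_Icc (by linarith)]
      simp only [add_sub_cancel_left]
      exact ⟨hδ'b, hδbδ⟩
  · -- sum estimate
    have hδ's : 0 < δ' ^ s := Real.rpow_pos_of_pos hδ'0 s
    have hsum_split : ∑ j ∈ Finset.range (N + 1 + M), Metric.diam (U' j) ^ s =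
        (∑ j ∈ Finset.range (N + 1), Metric.diam (U' j) ^ s) +
        ∑ j ∈ Finset.Ico (N + 1) (N + 1 + M), Metric.diam (U' j) ^ s := by
      rw [Finset.range_eq_Ico,
        ← Finset.sum_Ico_consecutive _ (by omega : 0 ≤ N + 1) (by omega : N + 1 ≤ N + 1 + M),
        ← Finset.range_eq_Ico]
    have hpart1 : ∑ j ∈ Finset.range (N + 1), Metric.diam (U' j) ^ s = (N + 1 : ℝ) * δ' ^ s := by
      have he : ∀ j ∈ Finset.range (N + 1), Metric.diam (U' j) ^ s = δ' ^ s := by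
        intro j hj
        rw [Finset.mem_range] at hj
        simp only [hU'def]
        rw [if_pos (by omega : j ≤ N), Real.diam_Icc (by linarith), sub_sub_cancel]
      rw [Finset.sum_congr rfl he, Finset.sum_const, Finset.card_range, nsmul_eq_mul]
      push_cast; ring
    have hpart2 : ∑ j ∈ Finset.Ico (N + 1) (N + 1 + M), Metric.diam (U' j) ^ s =
        (M : ℝ) * δb ^ s := by
      have he : ∀ j ∈ Finset.Ico (N + 1) (N + 1 + M), Metric.diam (U' j) ^ s = δb ^ s := by
        intro j hj
        rw [Finset.mem_Ico] at hj
        simp only [hU'def]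
        rw [if_neg (by omega), Real.diam_Icc (by linarith), add_sub_cancel_left]
      rw [Finset.sum_congr rfl he, Finset.sum_const, Nat.card_Ico, nsmul_eq_mul]
      have hMM : N + 1 + M - (N + 1) = M := by omega
      rw [hMM]
    -- bounds
    have hterm : ∀ i ∈ I, δ' ^ s ≤ Metric.diam (U i) ^ s :=
      fun i hi => Real.rpow_le_rpow hδ'0.le (hd i hi).1 hs0
    have hNbound : (N : ℝ) * δ' ^ s ≤ ε := by
      have h1 : ∑ _i ∈ I, δ' ^ s ≤ ∑ i ∈ I, Metric.diam (U i) ^ s := Finset.sum_le_sum hterm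
      rw [Finset.sum_const, nsmul_eq_mul] at h1
      exact le_trans h1 hsum
    have hδbs : δb ^ s ≤ ε := by
      have h1 : δb ^ s ≤ ∑ i ∈ I, Metric.diam (U i) ^ s :=
        Finset.single_le_sum (fun i _ => Real.rpow_nonneg Metric.diam_nonneg s) hi₀
      exact le_trans h1 hsum
    have hδ'sε : δ' ^ s ≤ ε := by
      have := Real.rpow_le_rpow hδ'0.le hδ'b hs0
      linarith
    have hpart1le : (N + 1 : ℝ) * δ' ^ s ≤ 2 * ε := by
      have : (N + 1 : ℝ) * δ' ^ s = (N : ℝ) * δ' ^ s + δ' ^ s := by ring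
      linarith
    -- part 2 bound
    have hxbb : xb * δb ^ (s - 1) ≤ ε := by
      have htermwise : ∀ i ∈ I, Metric.diam (U i) * δb ^ (s - 1) ≤ Metric.diam (U i) ^ s := by
        intro i hi
        have hdp := hdpos i hi
        have h1 : δb ^ (s - 1) ≤ Metric.diam (U i) ^ (s - 1) :=
          Real.rpow_le_rpow_of_nonpos hdp (hmax i hi) (by linarith)
        have h2 : Metric.diam (U i) * Metric.diam (U i) ^ (s - 1) = Metric.diam (U i) ^ s := by
          calc Metric.diam (U i) * Metric.diam (U i) ^ (s - 1)
              = Metric.diam (U i) ^ (1:ℝ) * Metric.diam (U i) ^ (s - 1) := by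
                rw [Real.rpow_one]
            _ = Metric.diam (U i) ^ (1 + (s - 1)) := (Real.rpow_add hdp _ _).symm
            _ = Metric.diam (U i) ^ s := by norm_num
        calc Metric.diam (U i) * δb ^ (s - 1)
            ≤ Metric.diam (U i) * Metric.diam (U i) ^ (s - 1) := by
              exact mul_le_mul_of_nonneg_left h1 hdp.le
          _ = Metric.diam (U i) ^ s := h2
      have h3 : xb * δb ^ (s - 1) ≤ (∑ i ∈ I, Metric.diam (U i)) * δb ^ (s - 1) := by
        have : (0:ℝ) ≤ δb ^ (s - 1) := (Real.rpow_pos_of_pos hδb0 _).le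
        exact mul_le_mul_of_nonneg_right hxbd this
      rw [Finset.sum_mul] at h3
      have h4 : ∑ i ∈ I, Metric.diam (U i) * δb ^ (s - 1) ≤ ∑ i ∈ I, Metric.diam (U i) ^ s :=
        Finset.sum_le_sum htermwise
      linarith
    have hpart2le : (M : ℝ) * δb ^ s ≤ 2 * ε := by
      have hMle : (M : ℝ) ≤ xb / δb + 1 := by
        have := Nat.floor_le (show (0:ℝ) ≤ xb / δb by positivity)
        push_cast [hMdef]
        linarith
      have hδbs0 : 0 < δb ^ s := Real.rpow_pos_of_pos hδb0 s
      have h5 : (M : ℝ) * δb ^ s ≤ (xb / δb + 1) * δb ^ s :=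
        mul_le_mul_of_nonneg_right hMle hδbs0.le
      have h6 : (xb / δb + 1) * δb ^ s = xb * δb ^ (s - 1) + δb ^ s := by
        rw [Real.rpow_sub hδb0, Real.rpow_one]
        field_simp
      rw [h6] at h5
      linarith
    rw [hsum_split, hpart1, hpart2]
    linarith
end D

section Efin
lemma tiling_mem {F : Set ℝ} (hF : F ⊆ Set.Icc 0 1) {θ δ : ℝ} (s : ℝ)
    (hθ0 : 0 < θ) (hθ1 : θ ≤ 1) (hδ0 : 0 < δ) (hδ1 : δ ≤ 1) :
    ∃ (I : Finset ℕ) (U : ℕ → Set ℝ), (F ⊆ ⋃ i ∈ I, U i) ∧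
      (∀ i ∈ I, δ ^ (1/θ) ≤ Metric.diam (U i) ∧ Metric.diam (U i) ≤ δ) ∧
      ∑ i ∈ I, Metric.diam (U i) ^ s ≤ δ ^ (s - 1) + δ ^ s := by
  have h1θ : (1:ℝ) ≤ 1/θ := by rw [le_div_iff₀ hθ0]; linarith
  have hδ'δ : δ ^ (1/θ) ≤ δ := by
    have := Real.rpow_le_rpow_of_exponent_ge hδ0 hδ1 h1θ
    rwa [Real.rpow_one] at this
  refine ⟨Finset.range (⌊1/δ⌋₊ + 1), fun j => Set.Icc (j * δ) (j * δ + δ), ?_, ?_, ?_⟩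
  · intro y hy
    obtain ⟨hy0, hy1⟩ := hF hy
    set m := ⌊y/δ⌋₊ with hmdef
    have hj : m ∈ Finset.range (⌊1/δ⌋₊ + 1) := by
      rw [Finset.mem_range]
      have : y / δ ≤ 1 / δ := by gcongr
      have := Nat.floor_le_floor this
      omega
    refine Set.mem_biUnion hj ?_
    constructor
    · have h1 : (m : ℝ) ≤ y / δ := Nat.floor_le (by positivity)
      rw [← le_div_iff₀ hδ0]
      exact h1
    · have h2 : y / δ < m + 1 := Nat.lt_floor_add_one _
      have h3 : y < (m + 1) * δ := by rw [← div_lt_iff₀ hδ0]; exact h2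
      nlinarith
  · intro j _
    rw [Real.diam_Icc (by linarith), add_sub_cancel_left]
    exact ⟨hδ'δ, le_rfl⟩
  · have he : ∀ j ∈ Finset.range (⌊1/δ⌋₊ + 1),
        Metric.diam (Set.Icc ((j:ℝ) * δ) ((j:ℝ) * δ + δ)) ^ s = δ ^ s := by
      intro j _
      rw [Real.diam_Icc (by linarith), add_sub_cancel_left]
    rw [Finset.sum_congr rfl he, Finset.sum_const, Finset.card_range, nsmul_eq_mul]
    have hfl : (⌊1/δ⌋₊ : ℝ) ≤ 1/δ := Nat.floor_le (by positivity)
    have hδs : (0:ℝ) < δ ^ s := Real.rpow_pos_of_pos hδ0 s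
    have h6 : (1/δ) * δ ^ s = δ ^ (s - 1) := by
      rw [Real.rpow_sub hδ0, Real.rpow_one]
      field_simp
    push_cast
    nlinarith [hfl, hδs]


lemma mem_upper_set_of_one_lt {F : Set ℝ} (hF : F ⊆ Set.Icc 0 1) {θ : ℝ}
    (hθ0 : 0 < θ) (hθ1 : θ ≤ 1) {s : ℝ} (hs : 1 < s) :
    0 ≤ s ∧ ∀ ε > (0:ℝ), ∃ δ₀ > (0:ℝ), ∀ δ : ℝ, 0 < δ → δ ≤ δ₀ →
      ∃ (I : Finset ℕ) (U : ℕ → Set ℝ), (F ⊆ ⋃ i ∈ I, U i) ∧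
        (∀ i ∈ I, δ ^ (1 / θ) ≤ Metric.diam (U i) ∧ Metric.diam (U i) ≤ δ) ∧
        ∑ i ∈ I, Metric.diam (U i) ^ s ≤ ε := by
  refine ⟨by linarith, fun ε hε => ?_⟩
  have hε2 : (0:ℝ) < ε / 2 := by linarith
  set c := (ε/2) ^ (1/(s-1)) with hcdef
  have hc0 : 0 < c := Real.rpow_pos_of_pos hε2 _
  refine ⟨min 1 c, by positivity, fun δ hδ0 hδle => ?_⟩
  have hδ1 : δ ≤ 1 := le_trans hδle (min_le_left _ _)
  have hδc : δ ≤ c := le_trans hδle (min_le_right _ _)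
  obtain ⟨I, U, h1, h2, h3⟩ := tiling_mem hF s hθ0 hθ1 hδ0 hδ1
  refine ⟨I, U, h1, h2, le_trans h3 ?_⟩
  have hs1 : (0:ℝ) ≤ s - 1 := by linarith
  have hA : δ ^ s ≤ δ ^ (s - 1) :=
    Real.rpow_le_rpow_of_exponent_ge hδ0 hδ1 (by linarith)
  have hB : δ ^ (s - 1) ≤ ε / 2 := by
    have h4 : δ ^ (s-1) ≤ c ^ (s-1) := Real.rpow_le_rpow hδ0.le hδc hs1
    have h5 : c ^ (s-1) = ε / 2 := by
      rw [hcdef, ← Real.rpow_mul hε2.le]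
      have : 1/(s-1) * (s-1) = 1 := one_div_mul_cancel (by linarith)
      rw [this, Real.rpow_one]
    linarith
  linarith

lemma mem_lower_set_of_one_lt {F : Set ℝ} (hF : F ⊆ Set.Icc 0 1) {θ : ℝ}
    (hθ0 : 0 < θ) (hθ1 : θ ≤ 1) {s : ℝ} (hs : 1 < s) :
    0 ≤ s ∧ ∀ ε > (0:ℝ), ∀ δ₀ > (0:ℝ), ∃ δ : ℝ, 0 < δ ∧ δ ≤ δ₀ ∧
      ∃ (I : Finset ℕ) (U : ℕ → Set ℝ), (F ⊆ ⋃ i ∈ I, U i) ∧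
        (∀ i ∈ I, δ ^ (1 / θ) ≤ Metric.diam (U i) ∧ Metric.diam (U i) ≤ δ) ∧
        ∑ i ∈ I, Metric.diam (U i) ^ s ≤ ε := by
  obtain ⟨h0, H⟩ := mem_upper_set_of_one_lt hF hθ0 hθ1 hs
  refine ⟨h0, fun ε hε δ₀' hδ₀' => ?_⟩
  obtain ⟨δ₀, hδ₀, H2⟩ := H ε hε
  refine ⟨min δ₀ δ₀', by positivity, min_le_right _ _, ?_⟩
  exact H2 _ (by positivity) (min_le_left _ _)
end Efin


/-- For every complementary set `E ∈ 𝒞_a` and every `θ ∈ [0,1]`: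
`dim_θ D_a ≤ dim_θ E` for both upper and lower θ-intermediate dimensions. -/
theorem Da_minimal (a : ℕ → ℝ) (hpos : ∀ n ≥ 1, 0 < a n) (hmono : ∀ n ≥ 1, a (n + 1) ≤ a n)
    (hsumm : Summable fun n => a (n + 1)) (htot : ∑' n : ℕ, a (n + 1) = 1)
    (E : Set ℝ) (hE : IsComplSet a E) :
    ∀ θ ∈ Set.Icc (0:ℝ) 1,
      upperIntDim θ (Da a) ≤ upperIntDim θ E ∧
      lowerIntDim θ (Da a) ≤ lowerIntDim θ E := by
  obtain ⟨g, hg1, hg2, hEeq⟩ := hE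
  have hEsub : E ⊆ Set.Icc 0 1 := by rw [hEeq]; exact Set.diff_subset
  have hDsub : Da a ⊆ Set.Icc 0 1 := Da_subset hpos hsumm htot
  intro θ hθ
  rcases eq_or_lt_of_le hθ.1 with hθ0 | hθ0
  · have hθ0' : θ = 0 := hθ0.symm
    subst hθ0'
    have hDa : dimH (Da a) = 0 := by
      apply dimH_countable
      apply Set.Countable.union (Set.countable_singleton 0)
      have hsub : {y : ℝ | ∃ k ≥ 1, y = xseq a k} ⊆ Set.range (xseq a) := by
        rintro y ⟨k, _, rfl⟩; exact ⟨k, rfl⟩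
      exact (Set.countable_range _).mono hsub
    constructor
    · simp only [upperIntDim, if_pos rfl]
      rw [hDa]
      simp [ENNReal.toReal_nonneg]
    · simp only [lowerIntDim, if_pos rfl]
      rw [hDa]
      simp [ENNReal.toReal_nonneg]
  · have hθ1 := hθ.2
    have hθne : θ ≠ 0 := ne_of_gt hθ0
    constructor
    · simp only [upperIntDim, if_neg hθne]
      apply csInf_le_csInf
      · exact ⟨0, fun x hx => hx.1⟩
      · exact ⟨2, mem_upper_set_of_one_lt hEsub hθ0 hθ1 one_lt_two⟩
      · intro s hs
        by_cases hs1 : s ≤ 1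
        · refine ⟨hs.1, fun ε hε => ?_⟩
          obtain ⟨δ₀, hδ₀, H⟩ := hs.2 (ε/4) (by linarith)
          refine ⟨min δ₀ 1, by positivity, fun δ hδ0' hδle => ?_⟩
          obtain ⟨I, U, hcov, hdm, hsum⟩ := H δ hδ0' (le_trans hδle (min_le_left _ _))
          rw [hEeq] at hcov
          obtain ⟨I', U', h1, h2, h3⟩ := transfer hpos hmono hsumm htot hg1 hg2 hθ0 hθ1 hs.1 hs1
            hδ0' (le_trans hδle (min_le_right _ _)) (by linarith : (0:ℝ) < ε/4) I U hcov hdm hsum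
          exact ⟨I', U', h1, h2, by linarith⟩
        · push_neg at hs1
          exact mem_upper_set_of_one_lt hDsub hθ0 hθ1 hs1
    · simp only [lowerIntDim, if_neg hθne]
      apply csInf_le_csInf
      · exact ⟨0, fun x hx => hx.1⟩
      · exact ⟨2, mem_lower_set_of_one_lt hEsub hθ0 hθ1 one_lt_two⟩
      · intro s hs
        by_cases hs1 : s ≤ 1
        · refine ⟨hs.1, fun ε hε δ₀ hδ₀ => ?_⟩
          obtain ⟨δ, hδ0', hδle, I, U, hcov, hdm, hsum⟩ :=
            hs.2 (ε/4) (by linarith) (min δ₀ 1) (by positivity)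
          rw [hEeq] at hcov
          obtain ⟨I', U', h1, h2, h3⟩ := transfer hpos hmono hsumm htot hg1 hg2 hθ0 hθ1 hs.1 hs1
            hδ0' (le_trans hδle (min_le_right _ _)) (by linarith : (0:ℝ) < ε/4) I U hcov hdm hsum
          exact ⟨δ, hδ0', le_trans hδle (min_le_left _ _), I', U', h1, h2, by linarith⟩
        · push_neg at hs1
          exact mem_lower_set_of_one_lt hDsub hθ0 hθ1 hs1
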